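/- If f : T → X satisfies V_ε(f,T) < ∞ for every ε > 0, then f is regulated on T: for every τ ∈ T that is a left limit point of T, d(f(s),f(t)) → 0 as s,t → τ⁻ in T, and similarly at every right limit point of T. -/

import Mathlib

open Filter Set

noncomputable def jordanVar {X : Type*} [PseudoMetricSpace X] (f : ℝ → X) (S : Set ℝ) : ENNReal :=
  ⨆ (n : ℕ) (t : Fin (n+1) → ℝ) (_ : Monotone t) (_ : ∀ i, t i ∈ S),
    ∑ i : Fin n, edist (f (t i.succ)) (f (t i.castSucc))

noncomputable def appVar {X : Type*} [PseudoMetricSpace X] (ε : ℝ) (f : ℝ → X) (S : Set ℝ) : ENNReal :=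
  ⨅ (g : ℝ → X) (_ : jordanVar g S < ⊤) (_ : ∀ t ∈ S, dist (f t) (g t) ≤ ε), jordanVar g S

def RegulatedOn {X : Type*} [PseudoMetricSpace X] (f : ℝ → X) (T : Set ℝ) : Prop :=
  (∀ τ ∈ T, (∀ δ > 0, (T ∩ Set.Ioo (τ - δ) τ).Nonempty) →
    ∀ η > 0, ∃ δ > 0, ∀ s ∈ T ∩ Set.Ioo (τ - δ) τ, ∀ u ∈ T ∩ Set.Ioo (τ - δ) τ,
      dist (f s) (f u) ≤ η) ∧
  (∀ τ ∈ T, (∀ δ > 0, (T ∩ Set.Ioo τ (τ + δ)).Nonempty) →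
    ∀ η > 0, ∃ δ > 0, ∀ s ∈ T ∩ Set.Ioo τ (τ + δ), ∀ u ∈ T ∩ Set.Ioo τ (τ + δ),
      dist (f s) (f u) ≤ η)

lemma le_jordanVar {X : Type*} [PseudoMetricSpace X] (g : ℝ → X) (T : Set ℝ)
    (n : ℕ) (t : Fin (n+1) → ℝ) (ht : Monotone t) (hm : ∀ i, t i ∈ T) :
    ∑ i : Fin n, edist (g (t i.succ)) (g (t i.castSucc)) ≤ jordanVar g T :=
  le_iSup_of_le n (le_iSup_of_le t (le_iSup_of_le ht (le_iSup_of_le hm le_rfl)))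

lemma pairsLB {X : Type*} [PseudoMetricSpace X] (g : ℝ → X) (T : Set ℝ)
    (η : ℝ) (n : ℕ) (a b : ℕ → ℝ)
    (hA : ∀ k < n, a k ∈ T) (hB : ∀ k < n, b k ∈ T)
    (hab : ∀ k < n, a k ≤ b k) (hba : ∀ k, k + 1 < n → b k ≤ a (k+1))
    (hd : ∀ k < n, ENNReal.ofReal η ≤ edist (g (a k)) (g (b k))) :
    (n : ENNReal) * ENNReal.ofReal η ≤ jordanVar g T := by
  rcases n with _ | m
  · simp
  set c : ℕ → ℝ := fun i => if i < 2*(m+1) then (if i % 2 = 0 then a (i/2) else b (i/2)) else b m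
    with hcdef
  have hc0 : ∀ k < m+1, c (2*k) = a k := by
    intro k hk
    simp only [hcdef]
    rw [if_pos (by omega), if_pos (by omega)]
    congr 1; omega
  have hc1 : ∀ k < m+1, c (2*k+1) = b k := by
    intro k hk
    simp only [hcdef]
    rw [if_pos (by omega), if_neg (by omega)]
    congr 1; omega
  have hcmem : ∀ i, c i ∈ T := by
    intro i
    simp only [hcdef]
    split_ifs with h1 h2
    · exact hA _ (by omega)
    · exact hB _ (by omega)
    · exact hB m (by omega)
  have hcstep : ∀ i, c i ≤ c (i+1) := by
    intro i
    simp only [hcdef]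
    split_ifs with p1 p2 p3 p4 p5 p6 p7 <;> try (exfalso; omega)
    all_goals try
      first
      | { have e1 : (i+1)/2 = i/2 := by omega
          rw [e1]; exact hab _ (by omega) }
      | { have e1 : (i+1)/2 = i/2 + 1 := by omega
          rw [e1]; exact hba _ (by omega) }
      | { have e1 : i/2 = m := by omega
          rw [e1] }
      | exact le_rfl
  have hcmono : Monotone c := monotone_nat_of_le_succ hcstep
  have key := le_jordanVar g T (2*m+1) (fun i => c i) (fun i j hij => hcmono hij) (fun i => hcmem i)
  refine le_trans ?_ key
  have hterm : ∀ k ∈ Finset.range (m+1),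
      ENNReal.ofReal η ≤ edist (g (c (2*k+1))) (g (c (2*k))) := by
    intro k hk
    rw [Finset.mem_range] at hk
    rw [hc0 k hk, hc1 k hk, edist_comm]
    exact hd k hk
  calc ((m+1 : ℕ) : ENNReal) * ENNReal.ofReal η
      = ∑ _k ∈ Finset.range (m+1), ENNReal.ofReal η := by
        simp [Finset.sum_const, mul_comm]
    _ ≤ ∑ k ∈ Finset.range (m+1), edist (g (c (2*k+1))) (g (c (2*k))) :=
        Finset.sum_le_sum hterm
    _ = ∑ j ∈ (Finset.range (m+1)).image (fun k => 2*k),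
          edist (g (c (j+1))) (g (c j)) := by
        rw [Finset.sum_image (by intro x _ y _ h; have h' : 2*x = 2*y := h; omega)]
    _ ≤ ∑ j ∈ Finset.range (2*m+1), edist (g (c (j+1))) (g (c j)) := by
        apply Finset.sum_le_sum_of_subset
        intro j hj
        simp only [Finset.mem_image, Finset.mem_range] at hj ⊢
        omega
    _ = ∑ i : Fin (2*m+1), edist (g (c (↑i+1))) (g (c ↑i)) :=
        (Fin.sum_univ_eq_sum_range (fun j => edist (g (c (j+1))) (g (c j))) (2*m+1)).symm
    _ = ∑ i : Fin (2*m+1), edist (g ((fun i : Fin (2*m+1+1) => c ↑i) i.succ))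
          (g ((fun i : Fin (2*m+1+1) => c ↑i) i.castSucc)) := rfl

lemma jordan_top_of_pairs {X : Type*} [PseudoMetricSpace X] (g : ℝ → X) (T : Set ℝ)
    (η : ℝ) (hη : 0 < η)
    (h : ∀ n : ℕ, (n : ENNReal) * ENNReal.ofReal η ≤ jordanVar g T) :
    jordanVar g T = ⊤ := by
  have hc : ENNReal.ofReal η ≠ 0 := by
    simp [ENNReal.ofReal_eq_zero, not_le, hη]
  refine eq_top_iff.2 ?_
  calc (⊤ : ENNReal) = ⊤ * ENNReal.ofReal η := (ENNReal.top_mul hc).symm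
    _ = (⨆ n : ℕ, (n : ENNReal)) * ENNReal.ofReal η := by
        rw [ENNReal.iSup_natCast]
    _ = ⨆ n : ℕ, (n : ENNReal) * ENNReal.ofReal η := by
        rw [ENNReal.iSup_mul]
    _ ≤ jordanVar g T := iSup_le h

lemma cauchyLeft {X : Type*} [PseudoMetricSpace X] {g : ℝ → X} {T : Set ℝ}
    (hg : jordanVar g T < ⊤) (τ η : ℝ) (hη : 0 < η) :
    ∃ δ > 0, ∀ s ∈ T ∩ Set.Ioo (τ - δ) τ, ∀ u ∈ T ∩ Set.Ioo (τ - δ) τ,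
      dist (g s) (g u) ≤ η := by
  by_contra hcon
  push_neg at hcon
  -- hcon : ∀ δ > 0, ∃ s ∈ ..., ∃ u ∈ ..., η < dist (g s) (g u)
  have H : ∀ β, β < τ → ∃ p : ℝ × ℝ, p.1 ∈ T ∧ p.2 ∈ T ∧ β < p.1 ∧ p.1 < p.2 ∧
      p.2 < τ ∧ η < dist (g p.1) (g p.2) := by
    intro β hβ
    obtain ⟨s, ⟨hsT, hs1, hs2⟩, u, ⟨huT, hu1, hu2⟩, hd⟩ := hcon (τ - β) (by linarith)
    rw [sub_sub_cancel] at hs1 hu1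
    rcases lt_trichotomy s u with h | h | h
    · exact ⟨(s, u), hsT, huT, hs1, h, hu2, hd⟩
    · subst h; simp at hd; linarith
    · exact ⟨(u, s), huT, hsT, hu1, h, hs2, by rwa [dist_comm]⟩
  have step : ∀ β, β < τ → {p : ℝ × ℝ // p.1 ∈ T ∧ p.2 ∈ T ∧ β < p.1 ∧ p.1 < p.2 ∧
      p.2 < τ ∧ η < dist (g p.1) (g p.2)} :=
    fun β hβ => Classical.indefiniteDescription _ (H β hβ)
  set step2 : ℝ → ℝ × ℝ := fun β => if h : β < τ then (step β h).1 else (τ, τ) with hstep2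
  have hstepP : ∀ β, β < τ → (step2 β).1 ∈ T ∧ (step2 β).2 ∈ T ∧ β < (step2 β).1 ∧
      (step2 β).1 < (step2 β).2 ∧ (step2 β).2 < τ ∧ η < dist (g (step2 β).1) (g (step2 β).2) := by
    intro β hβ
    simp only [hstep2, dif_pos hβ]
    exact (step β hβ).2
  obtain ⟨Q, hQ0, hQs⟩ : ∃ Q : ℕ → ℝ × ℝ, Q 0 = step2 (τ-1) ∧ ∀ n, Q (n+1) = step2 (Q n).2 :=
    ⟨Nat.rec (step2 (τ-1)) (fun _ p => step2 p.2), rfl, fun n => rfl⟩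
  have inv : ∀ n, (Q n).1 ∈ T ∧ (Q n).2 ∈ T ∧ (Q n).1 < (Q n).2 ∧ (Q n).2 < τ ∧
      η < dist (g (Q n).1) (g (Q n).2) := by
    intro n
    induction n with
    | zero =>
      rw [hQ0]
      obtain ⟨h1, h2, _, h4, h5, h6⟩ := hstepP (τ-1) (by linarith)
      exact ⟨h1, h2, h4, h5, h6⟩
    | succ n ih =>
      rw [hQs]
      obtain ⟨h1, h2, _, h4, h5, h6⟩ := hstepP (Q n).2 ih.2.2.2.1
      exact ⟨h1, h2, h4, h5, h6⟩
  have chain : ∀ n, (Q n).2 < (Q (n+1)).1 := by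
    intro n
    rw [hQs]
    exact (hstepP (Q n).2 (inv n).2.2.2.1).2.2.1
  have hLB : ∀ n : ℕ, (n : ENNReal) * ENNReal.ofReal η ≤ jordanVar g T := by
    intro n
    refine pairsLB g T η n (fun k => (Q k).1) (fun k => (Q k).2)
      (fun k _ => (inv k).1) (fun k _ => (inv k).2.1)
      (fun k _ => ((inv k).2.2.1).le) (fun k _ => (chain k).le) ?_
    intro k _
    rw [edist_dist]
    exact ENNReal.ofReal_le_ofReal ((inv k).2.2.2.2).le
  exact absurd (jordan_top_of_pairs g T η hη hLB) hg.ne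

lemma cauchyRight {X : Type*} [PseudoMetricSpace X] {g : ℝ → X} {T : Set ℝ}
    (hg : jordanVar g T < ⊤) (τ η : ℝ) (hη : 0 < η) :
    ∃ δ > 0, ∀ s ∈ T ∩ Set.Ioo τ (τ + δ), ∀ u ∈ T ∩ Set.Ioo τ (τ + δ),
      dist (g s) (g u) ≤ η := by
  by_contra hcon
  push_neg at hcon
  have H : ∀ β, τ < β → ∃ p : ℝ × ℝ, p.1 ∈ T ∧ p.2 ∈ T ∧ τ < p.1 ∧ p.1 < p.2 ∧
      p.2 < β ∧ η < dist (g p.1) (g p.2) := by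
    intro β hβ
    obtain ⟨s, ⟨hsT, hs1, hs2⟩, u, ⟨huT, hu1, hu2⟩, hd⟩ := hcon (β - τ) (by linarith)
    rw [add_sub_cancel] at hs2 hu2
    rcases lt_trichotomy s u with h | h | h
    · exact ⟨(s, u), hsT, huT, hs1, h, hu2, hd⟩
    · subst h; simp at hd; linarith
    · exact ⟨(u, s), huT, hsT, hu1, h, hs2, by rwa [dist_comm]⟩
  have step : ∀ β, τ < β → {p : ℝ × ℝ // p.1 ∈ T ∧ p.2 ∈ T ∧ τ < p.1 ∧ p.1 < p.2 ∧
      p.2 < β ∧ η < dist (g p.1) (g p.2)} :=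
    fun β hβ => Classical.indefiniteDescription _ (H β hβ)
  set step2 : ℝ → ℝ × ℝ := fun β => if h : τ < β then (step β h).1 else (τ, τ) with hstep2
  have hstepP : ∀ β, τ < β → (step2 β).1 ∈ T ∧ (step2 β).2 ∈ T ∧ τ < (step2 β).1 ∧
      (step2 β).1 < (step2 β).2 ∧ (step2 β).2 < β ∧ η < dist (g (step2 β).1) (g (step2 β).2) := by
    intro β hβ
    simp only [hstep2, dif_pos hβ]
    exact (step β hβ).2
  obtain ⟨Q, hQ0, hQs⟩ : ∃ Q : ℕ → ℝ × ℝ, Q 0 = step2 (τ+1) ∧ ∀ n, Q (n+1) = step2 (Q n).1 :=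
    ⟨Nat.rec (step2 (τ+1)) (fun _ p => step2 p.1), rfl, fun n => rfl⟩
  have inv : ∀ n, (Q n).1 ∈ T ∧ (Q n).2 ∈ T ∧ τ < (Q n).1 ∧ (Q n).1 < (Q n).2 ∧
      η < dist (g (Q n).1) (g (Q n).2) := by
    intro n
    induction n with
    | zero =>
      rw [hQ0]
      obtain ⟨h1, h2, h3, h4, _, h6⟩ := hstepP (τ+1) (by linarith)
      exact ⟨h1, h2, h3, h4, h6⟩
    | succ n ih =>
      rw [hQs]
      obtain ⟨h1, h2, h3, h4, _, h6⟩ := hstepP (Q n).1 ih.2.2.1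
      exact ⟨h1, h2, h3, h4, h6⟩
  have chain : ∀ n, (Q (n+1)).2 < (Q n).1 := by
    intro n
    rw [hQs]
    exact (hstepP (Q n).1 (inv n).2.2.1).2.2.2.2.1
  have hLB : ∀ n : ℕ, (n : ENNReal) * ENNReal.ofReal η ≤ jordanVar g T := by
    intro n
    refine pairsLB g T η n (fun k => (Q (n-1-k)).1) (fun k => (Q (n-1-k)).2)
      (fun k _ => (inv _).1) (fun k _ => (inv _).2.1)
      (fun k _ => ((inv _).2.2.2.1).le) ?_ ?_
    · intro k hk
      have e : n - 1 - k = (n - 1 - (k+1)) + 1 := by omega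
      show (Q (n-1-k)).2 ≤ (Q (n-1-(k+1))).1
      rw [e]
      exact (chain _).le
    · intro k _
      rw [edist_dist]
      exact ENNReal.ofReal_le_ofReal ((inv _).2.2.2.2).le
  exact absurd (jordan_top_of_pairs g T η hη hLB) hg.ne

theorem stmt13 {X : Type*} [PseudoMetricSpace X] (T : Set ℝ) (hT : T.Nonempty)
    (f : ℝ → X) (hfin : ∀ ε : ℝ, 0 < ε → appVar ε f T < ⊤) :
    RegulatedOn f T := by
  have hget : ∀ η : ℝ, 0 < η → ∃ g : ℝ → X, jordanVar g T < ⊤ ∧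
      ∀ t ∈ T, dist (f t) (g t) ≤ η / 4 := by
    intro η hη
    have h := hfin (η/4) (by linarith)
    rw [appVar] at h
    simp only [iInf_lt_iff] at h
    obtain ⟨g, h1, h2, _⟩ := h
    exact ⟨g, h1, h2⟩
  constructor
  · intro τ _ _ η hη
    obtain ⟨g, hg, happ⟩ := hget η hη
    obtain ⟨δ, hδ, hδp⟩ := cauchyLeft hg τ (η/2) (by linarith)
    refine ⟨δ, hδ, ?_⟩
    intro s hs u hu
    calc dist (f s) (f u) ≤ dist (f s) (g s) + dist (g s) (g u) + dist (g u) (f u) :=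
          dist_triangle4 _ _ _ _
      _ ≤ η/4 + η/2 + η/4 := by
          refine add_le_add (add_le_add (happ s hs.1) (hδp s hs u hu)) ?_
          rw [dist_comm]
          exact happ u hu.1
      _ = η := by ring
  · intro τ _ _ η hη
    obtain ⟨g, hg, happ⟩ := hget η hη
    obtain ⟨δ, hδ, hδp⟩ := cauchyRight hg τ (η/2) (by linarith)
    refine ⟨δ, hδ, ?_⟩
    intro s hs u hu
    calc dist (f s) (f u) ≤ dist (f s) (g s) + dist (g s) (g u) + dist (g u) (f u) :=
          dist_triangle4 _ _ _ _
      _ ≤ η/4 + η/2 + η/4 := by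
          refine add_le_add (add_le_add (happ s hs.1) (hδp s hs u hu)) ?_
          rw [dist_comm]
          exact happ u hu.1
      _ = η := by ring
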